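/- Let M be a 2-dimensional submodule of F[x]^2 with minimal Gröbner basis {g_1 = (g_11, g_12), g_2 = (g_21, g_22)} such that g_12(0) = 0 and g_22(0) ≠ 0. Then g_2 has minimal leading monomial among all f = (f_1, f_2) in M with f_2(0) ≠ 0, and every such minimal f has the form f = a_2 g_2 + a_1 g_1 with a_2 a nonzero scalar and a_1 ∈ F[x] with lm(a_1 g_1) ≤ lm(g_2). -/

import Mathlib

open Polynomial

open scoped Classical

/-- Support of a polynomial vector: monomials `(degree, position)` ordered lexicographically,
which is the term-over-position (top) ordering. -/
noncomputable def vsupp {R : Type*} [CommRing R] {q : ℕ} (f : Fin q → R[X]) :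
    Finset (Lex (ℕ × Fin q)) :=
  Finset.univ.biUnion fun i => (f i).support.image fun α => toLex (α, i)

/-- Leading monomial w.r.t. the top ordering (`⊥` for the zero vector). -/
noncomputable def vlm {R : Type*} [CommRing R] {q : ℕ} (f : Fin q → R[X]) :
    WithBot (Lex (ℕ × Fin q)) := (vsupp f).max

/-- Degree of the leading monomial (junk value `0` for the zero vector). -/
noncomputable def vdeg {R : Type*} [CommRing R] {q : ℕ} (f : Fin q → R[X]) : ℕ :=
  WithBot.unbotD 0 ((vlm f).map fun m => (ofLex m).1)

/-- Leading position. -/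
noncomputable def vlpos {R : Type*} [CommRing R] {q : ℕ} (f : Fin q → R[X]) : WithBot (Fin q) :=
  (vlm f).map fun m => (ofLex m).2

/-- Leading coefficient. -/
noncomputable def vlc {R : Type*} [CommRing R] {q : ℕ} (f : Fin q → R[X]) : R :=
  WithBot.unbotD 0 ((vlm f).map fun m => (f (ofLex m).2).coeff (ofLex m).1)

/-- Leading term of a polynomial vector, as a polynomial vector. -/
noncomputable def vlt {R : Type*} [CommRing R] {q : ℕ} (f : Fin q → R[X]) : Fin q → R[X] :=
  WithBot.unbotD 0 ((vlm f).map fun m => fun j : Fin q =>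
    if j = (ofLex m).2 then C ((f (ofLex m).2).coeff (ofLex m).1) * X ^ (ofLex m).1 else 0)

/-- The leading term submodule `L(F)`. -/
noncomputable def ltSubmodule {R : Type*} [CommRing R] {q : ℕ} (S : Set (Fin q → R[X])) :
    Submodule R[X] (Fin q → R[X]) :=
  Submodule.span R[X] (vlt '' S)

/-- `G` is a Gröbner basis of `M`: `G ⊆ M` and `L(G) = L(M)`. -/
def IsGroebner {R : Type*} [CommRing R] {q : ℕ} (M : Submodule R[X] (Fin q → R[X]))
    (G : Finset (Fin q → R[X])) : Prop :=
  (G : Set (Fin q → R[X])) ⊆ M ∧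
    ltSubmodule (G : Set (Fin q → R[X])) = ltSubmodule (M : Set (Fin q → R[X]))

/-- One-step reduction of `f` to `h` modulo the finite set `Fs` (Adams–Loustaunau Def. 4.1.1). -/
def ReducesOneStep {R : Type*} [CommRing R] {q : ℕ} (Fs : Finset (Fin q → R[X]))
    (f h : Fin q → R[X]) : Prop :=
  f ≠ 0 ∧ ∃ (m : ℕ) (jv : Fin m → Fin q → R[X]) (α : Fin m → ℕ) (β : Fin m → R),
    0 < m ∧ (∀ i, jv i ∈ Fs) ∧ (∀ i, jv i ≠ 0) ∧ Function.Injective jv ∧ (∀ i, β i ≠ 0) ∧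
    (∀ i, vlm f = (vlm (jv i)).map fun mm => toLex (α i + (ofLex mm).1, (ofLex mm).2)) ∧
    vlt f = ∑ i, (C (β i) * X ^ α i) • vlt (jv i) ∧
    h = f - ∑ i, (C (β i) * X ^ α i) • jv i

/-- Minimal Gröbner basis: a Gröbner basis each of whose elements is irreducible
modulo the others. -/
def IsMinimalGroebner {R : Type*} [CommRing R] {q : ℕ} (M : Submodule R[X] (Fin q → R[X]))
    (G : Finset (Fin q → R[X])) : Prop :=
  IsGroebner M G ∧ ∀ g ∈ G, ∀ h, ¬ ReducesOneStep (G.erase g) g h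

section AuxLemmas

variable {R : Type*} [CommRing R] {q : ℕ}

instance (q : ℕ) : WellFoundedLT (WithBot (Lex (ℕ × Fin q))) := by
  have h : WellFoundedLT (Lex (ℕ × Fin q)) := inferInstance
  exact @WithBot.instWellFoundedLT _ _ h

theorem mem_vsupp {f : Fin q → R[X]} {m : Lex (ℕ × Fin q)} :
    m ∈ vsupp f ↔ (f (ofLex m).2).coeff (ofLex m).1 ≠ 0 := by
  constructor
  · intro hm
    rcases Finset.mem_biUnion.mp hm with ⟨i, -, hi⟩
    rcases Finset.mem_image.mp hi with ⟨a, ha, rfl⟩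
    simpa using Polynomial.mem_support_iff.mp ha
  · intro h
    exact Finset.mem_biUnion.mpr ⟨(ofLex m).2, Finset.mem_univ _,
      Finset.mem_image.mpr ⟨(ofLex m).1, Polynomial.mem_support_iff.mpr h, rfl⟩⟩

theorem le_vlm {f : Fin q → R[X]} {n : ℕ} {i : Fin q} (h : (f i).coeff n ≠ 0) :
    (↑(toLex (n, i)) : WithBot (Lex (ℕ × Fin q))) ≤ vlm f :=
  Finset.le_max (mem_vsupp.mpr h)

theorem coeff_eq_zero_of_vlm_lt {f : Fin q → R[X]} {n : ℕ} {i : Fin q}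
    (h : vlm f < ↑(toLex (n, i))) : (f i).coeff n = 0 := by
  by_contra hc
  exact absurd (le_vlm hc) (not_le.mpr h)

theorem vlm_zero : vlm (0 : Fin q → R[X]) = ⊥ := by
  have : vsupp (0 : Fin q → R[X]) = ∅ := by ext x; simp [vsupp]
  rw [vlm, this]
  rfl

theorem vlt_zero : vlt (0 : Fin q → R[X]) = 0 := by
  rw [vlt, vlm_zero]; rfl

theorem exists_vlm {f : Fin q → R[X]} (hf : f ≠ 0) : ∃ m : Lex (ℕ × Fin q), vlm f = ↑m := by
  cases h : vlm f with
  | bot =>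
    exfalso
    apply hf
    funext i
    apply Polynomial.ext
    intro n
    rw [Pi.zero_apply, Polynomial.coeff_zero]
    by_contra hc
    have hmem : toLex (n, i) ∈ vsupp f := mem_vsupp.mpr hc
    rw [Finset.max_eq_bot.mp h] at hmem
    exact absurd hmem (Finset.notMem_empty _)
  | coe m => exact ⟨m, rfl⟩

theorem coeff_vlm_ne_zero {f : Fin q → R[X]} {m : Lex (ℕ × Fin q)} (h : vlm f = ↑m) :
    (f (ofLex m).2).coeff (ofLex m).1 ≠ 0 :=
  mem_vsupp.mp (Finset.mem_of_max h)

theorem vlt_of_vlm {f : Fin q → R[X]} {m : Lex (ℕ × Fin q)} (h : vlm f = ↑m) :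
    vlt f = fun j => if j = (ofLex m).2 then
      C ((f (ofLex m).2).coeff (ofLex m).1) * X ^ (ofLex m).1 else 0 := by
  rw [vlt, h]; rfl

theorem natDegree_le_of_vlm {f : Fin q → R[X]} {m : Lex (ℕ × Fin q)} (h : vlm f = ↑m)
    (i : Fin q) : (f i).natDegree ≤ (ofLex m).1 := by
  apply Polynomial.natDegree_le_iff_coeff_eq_zero.mpr
  intro N hN
  apply coeff_eq_zero_of_vlm_lt
  rw [h]
  apply WithBot.coe_lt_coe.mpr
  have hmm : m = toLex ((ofLex m).1, (ofLex m).2) := rfl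
  rw [hmm]
  exact Prod.Lex.lt_iff.mpr (Or.inl hN)

theorem natDegree_eq_of_vlm {f : Fin q → R[X]} {m : Lex (ℕ × Fin q)} (h : vlm f = ↑m) :
    (f (ofLex m).2).natDegree = (ofLex m).1 :=
  le_antisymm (natDegree_le_of_vlm h _) (Polynomial.le_natDegree_of_ne_zero (coeff_vlm_ne_zero h))

theorem natDegree_lt_of_vlm {f : Fin q → R[X]} {m : Lex (ℕ × Fin q)} (h : vlm f = ↑m)
    {i : Fin q} (hi : (ofLex m).2 < i) (hfi : f i ≠ 0) : (f i).natDegree < (ofLex m).1 := by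
  rcases lt_or_eq_of_le (natDegree_le_of_vlm h i) with hlt | heq
  · exact hlt
  · exfalso
    have hc0 : (f i).coeff (ofLex m).1 = 0 := by
      apply coeff_eq_zero_of_vlm_lt
      rw [h]
      apply WithBot.coe_lt_coe.mpr
      have hmm : m = toLex ((ofLex m).1, (ofLex m).2) := rfl
      rw [hmm]
      exact Prod.Lex.lt_iff.mpr (Or.inr ⟨rfl, hi⟩)
    rw [← heq] at hc0
    exact Polynomial.leadingCoeff_ne_zero.mpr hfi hc0

theorem vlm_add_le {f g : Fin q → R[X]} : vlm (f + g) ≤ max (vlm f) (vlm g) := by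
  apply Finset.max_le
  intro a ha
  have h := mem_vsupp.mp ha
  rw [Pi.add_apply, Polynomial.coeff_add] at h
  by_cases h1 : (f (ofLex a).2).coeff (ofLex a).1 = 0
  · have h2 : (g (ofLex a).2).coeff (ofLex a).1 ≠ 0 := by
      intro h2; exact h (by rw [h1, h2, add_zero])
    exact le_trans (le_vlm h2) (le_max_right _ _)
  · exact le_trans (le_vlm h1) (le_max_left _ _)

end AuxLemmas

section FieldLemmas

variable {F : Type*} [Field F] {q : ℕ}

theorem vlm_smul {p : F[X]} (hp : p ≠ 0) {g : Fin q → F[X]} {m : Lex (ℕ × Fin q)}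
    (hg : vlm g = ↑m) :
    vlm (p • g) = ↑(toLex (p.natDegree + (ofLex m).1, (ofLex m).2)) := by
  have hgj : g (ofLex m).2 ≠ 0 := fun h0 => coeff_vlm_ne_zero hg (by rw [h0]; simp)
  have hnd : (g (ofLex m).2).natDegree = (ofLex m).1 := natDegree_eq_of_vlm hg
  apply le_antisymm
  · apply Finset.max_le
    intro a ha
    have hc : ((p • g) (ofLex a).2).coeff (ofLex a).1 ≠ 0 := mem_vsupp.mp ha
    have hpg : (p • g) (ofLex a).2 = p * g (ofLex a).2 := rfl
    rw [hpg] at hc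
    have hgi : g (ofLex a).2 ≠ 0 := by
      intro h0; exact hc (by rw [h0, mul_zero, Polynomial.coeff_zero])
    have hn : (ofLex a).1 ≤ p.natDegree + (g (ofLex a).2).natDegree := by
      have h1 := Polynomial.le_natDegree_of_ne_zero hc
      rwa [Polynomial.natDegree_mul hp hgi] at h1
    have hgd : (g (ofLex a).2).natDegree ≤ (ofLex m).1 := natDegree_le_of_vlm hg _
    apply WithBot.coe_le_coe.mpr
    have ha2 : a = toLex ((ofLex a).1, (ofLex a).2) := rfl
    rw [ha2]
    apply Prod.Lex.le_iff.mpr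
    have hle2 : (ofLex a).1 ≤ p.natDegree + (ofLex m).1 := by omega
    rcases lt_or_eq_of_le hle2 with hlt | heqn
    · exact Or.inl hlt
    · refine Or.inr ⟨heqn, ?_⟩
      show (ofLex a).2 ≤ (ofLex m).2
      by_contra hji
      push_neg at hji
      have hlt2 := natDegree_lt_of_vlm hg hji hgi
      omega
  · have hcoeff : ((p • g) (ofLex m).2).coeff (p.natDegree + (ofLex m).1) ≠ 0 := by
      have hpg : (p • g) (ofLex m).2 = p * g (ofLex m).2 := rfl
      rw [hpg, ← hnd, Polynomial.coeff_mul_degree_add_degree]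
      exact mul_ne_zero (Polynomial.leadingCoeff_ne_zero.mpr hp)
        (Polynomial.leadingCoeff_ne_zero.mpr hgj)
    exact le_vlm hcoeff

theorem single_step (g : Fin q → F[X]) (p : F[X]) (d : ℕ) (j : Fin q) :
    ∃ qq : F[X], vlm (qq • g) ≤ ↑(toLex (d, j)) ∧
      ((qq • g) j).coeff d = ((p • vlt g) j).coeff d := by
  by_cases hg : g = 0
  · subst hg
    refine ⟨0, ?_, ?_⟩
    · rw [zero_smul, vlm_zero]; exact bot_le
    · simp [vlt_zero]
  · obtain ⟨m, hm⟩ := exists_vlm hg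
    have hvlt := vlt_of_vlm hm
    by_cases hcase : j = (ofLex m).2 ∧ (ofLex m).1 ≤ d
    · obtain ⟨hj, hd⟩ := hcase
      refine ⟨C (p.coeff (d - (ofLex m).1)) * X ^ (d - (ofLex m).1), ?_, ?_⟩
      · by_cases hz : p.coeff (d - (ofLex m).1) = 0
        · rw [hz]; simp [vlm_zero]
        · have hqq : (C (p.coeff (d - (ofLex m).1)) * X ^ (d - (ofLex m).1)) ≠ 0 :=
            mul_ne_zero (Polynomial.C_ne_zero.mpr hz) (pow_ne_zero _ Polynomial.X_ne_zero)
          rw [vlm_smul hqq hm, Polynomial.natDegree_C_mul_X_pow _ _ hz, Nat.sub_add_cancel hd, hj]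
      · rw [hvlt]
        have hL : (((C (p.coeff (d - (ofLex m).1)) * X ^ (d - (ofLex m).1)) • g) j).coeff d
            = p.coeff (d - (ofLex m).1) * (g (ofLex m).2).coeff (ofLex m).1 := by
          have : ((C (p.coeff (d - (ofLex m).1)) * X ^ (d - (ofLex m).1)) • g) j
              = C (p.coeff (d - (ofLex m).1)) * (X ^ (d - (ofLex m).1) * g j) := by
            rw [Pi.smul_apply, smul_eq_mul, mul_assoc]
          have h2 := Polynomial.coeff_X_pow_mul (g j) (d - (ofLex m).1) (ofLex m).1
          rw [show (ofLex m).1 + (d - (ofLex m).1) = d from by omega] at h2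
          rw [this, Polynomial.coeff_C_mul, h2, hj]
        have hR : ((p • vlt g) j).coeff d
            = (g (ofLex m).2).coeff (ofLex m).1 * p.coeff (d - (ofLex m).1) := by
          rw [vlt_of_vlm hm, Pi.smul_apply, smul_eq_mul, hj, if_pos rfl, mul_left_comm,
            Polynomial.coeff_C_mul, Polynomial.coeff_mul_X_pow', if_pos hd]
        rw [hvlt] at hR
        rw [hL, hR, mul_comm]
    · refine ⟨0, ?_, ?_⟩
      · rw [zero_smul, vlm_zero]; exact bot_le
      · rw [zero_smul, Pi.zero_apply, Polynomial.coeff_zero, hvlt, Pi.smul_apply, smul_eq_mul]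
        by_cases hj : j = (ofLex m).2
        · have hd : d < (ofLex m).1 := by
            rcases not_and_or.mp hcase with h | h
            · exact absurd hj h
            · omega
          rw [if_pos hj, mul_left_comm, Polynomial.coeff_C_mul, Polynomial.coeff_mul_X_pow',
            if_neg (by omega), mul_zero]
        · rw [if_neg hj, mul_zero, Polynomial.coeff_zero]

end FieldLemmas
section Division

theorem toLex_le_toLex {q : ℕ} {n₁ n₂ : ℕ} {i₁ i₂ : Fin q} :
    toLex (n₁, i₁) ≤ toLex (n₂, i₂) ↔ n₁ < n₂ ∨ (n₁ = n₂ ∧ i₁ ≤ i₂) := by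
  simpa using (Prod.Lex.le_iff : toLex (n₁, i₁) ≤ toLex (n₂, i₂) ↔ _)

variable {F : Type*} [Field F] {q : ℕ}

theorem division {M : Submodule (Polynomial F) (Fin q → F[X])}
    {g₁ g₂ : Fin q → F[X]} (h₁ : g₁ ∈ M) (h₂ : g₂ ∈ M)
    (hspan : ltSubmodule ({g₁, g₂} : Set (Fin q → F[X])) = ltSubmodule (M : Set (Fin q → F[X]))) :
    ∀ f ∈ M, ∃ a₁ a₂ : F[X], f = a₁ • g₁ + a₂ • g₂ ∧
      vlm (a₁ • g₁) ≤ vlm f ∧ vlm (a₂ • g₂) ≤ vlm f := by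
  suffices H : ∀ B : WithBot (Lex (ℕ × Fin q)), ∀ f ∈ M, vlm f = B →
      ∃ a₁ a₂ : F[X], f = a₁ • g₁ + a₂ • g₂ ∧
        vlm (a₁ • g₁) ≤ vlm f ∧ vlm (a₂ • g₂) ≤ vlm f by
    intro f hf
    exact H (vlm f) f hf rfl
  intro B
  induction B using WellFoundedLT.induction with
  | _ B IH =>
  intro f hf hB
  by_cases hf0 : f = 0
  · subst hf0
    refine ⟨0, 0, by simp, ?_, ?_⟩ <;> rw [zero_smul] <;> exact le_refl _
  · obtain ⟨m, hm⟩ := exists_vlm hf0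
    have hmem : vlt f ∈ ltSubmodule (M : Set (Fin q → F[X])) :=
      Submodule.subset_span (Set.mem_image_of_mem _ hf)
    rw [← hspan, ltSubmodule, Set.image_insert_eq, Set.image_singleton] at hmem
    obtain ⟨p₁, p₂, hp⟩ := Submodule.mem_span_pair.mp hmem
    obtain ⟨q₁, hq₁l, hq₁c⟩ := single_step g₁ p₁ (ofLex m).1 (ofLex m).2
    obtain ⟨q₂, hq₂l, hq₂c⟩ := single_step g₂ p₂ (ofLex m).1 (ofLex m).2
    have hmm : (↑(toLex ((ofLex m).1, (ofLex m).2)) : WithBot (Lex (ℕ × Fin q))) = ↑m := rfl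
    rw [hmm] at hq₁l hq₂l
    set f' := f - (q₁ • g₁ + q₂ • g₂) with hf'def
    have hcoeffm : (f' (ofLex m).2).coeff (ofLex m).1 = 0 := by
      have hvc : ((q₁ • g₁) (ofLex m).2).coeff (ofLex m).1
          + ((q₂ • g₂) (ofLex m).2).coeff (ofLex m).1
          = (f (ofLex m).2).coeff (ofLex m).1 := by
        rw [hq₁c, hq₂c]
        calc ((p₁ • vlt g₁) (ofLex m).2).coeff (ofLex m).1
              + ((p₂ • vlt g₂) (ofLex m).2).coeff (ofLex m).1
            = ((p₁ • vlt g₁ + p₂ • vlt g₂) (ofLex m).2).coeff (ofLex m).1 := by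
              rw [Pi.add_apply, Polynomial.coeff_add]
          _ = (vlt f (ofLex m).2).coeff (ofLex m).1 := by rw [hp]
          _ = (f (ofLex m).2).coeff (ofLex m).1 := by
              rw [vlt_of_vlm hm]
              simp [Polynomial.coeff_C_mul, Polynomial.coeff_X_pow]
      rw [hf'def, Pi.sub_apply, Pi.add_apply, Polynomial.coeff_sub, Polynomial.coeff_add,
        sub_eq_zero]
      exact hvc.symm
    have hflt : vlm f' < vlm f := by
      rw [hm]
      have hle : vlm f' ≤ ↑m := by
        apply Finset.max_le
        intro a ha
        by_contra hgt
        push_neg at hgt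
        have hgt' : (↑m : WithBot (Lex (ℕ × Fin q))) < ↑(toLex ((ofLex a).1, (ofLex a).2)) :=
          hgt
        have ha' := mem_vsupp.mp ha
        apply ha'
        have hz1 : (f (ofLex a).2).coeff (ofLex a).1 = 0 :=
          coeff_eq_zero_of_vlm_lt (by rw [hm]; exact hgt')
        have hz2 : ((q₁ • g₁) (ofLex a).2).coeff (ofLex a).1 = 0 :=
          coeff_eq_zero_of_vlm_lt (lt_of_le_of_lt hq₁l hgt')
        have hz3 : ((q₂ • g₂) (ofLex a).2).coeff (ofLex a).1 = 0 :=
          coeff_eq_zero_of_vlm_lt (lt_of_le_of_lt hq₂l hgt')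
        rw [hf'def, Pi.sub_apply, Pi.add_apply, Polynomial.coeff_sub, Polynomial.coeff_add,
          hz1, hz2, hz3]
        ring
      rcases lt_or_eq_of_le hle with hlt | heq
      · exact hlt
      · exact absurd hcoeffm (coeff_vlm_ne_zero heq)
    have hf'M : f' ∈ M := M.sub_mem hf (M.add_mem (M.smul_mem _ h₁) (M.smul_mem _ h₂))
    obtain ⟨a₁, a₂, hrep, hb₁, hb₂⟩ := IH (vlm f') (hB ▸ hflt) f' hf'M rfl
    refine ⟨q₁ + a₁, q₂ + a₂, ?_, ?_, ?_⟩
    · have hfeq : f = (q₁ • g₁ + q₂ • g₂) + f' := by rw [hf'def]; abel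
      rw [hfeq, hrep, add_smul, add_smul]
      abel
    · calc vlm ((q₁ + a₁) • g₁) ≤ max (vlm (q₁ • g₁)) (vlm (a₁ • g₁)) := by
            rw [add_smul]; exact vlm_add_le
        _ ≤ vlm f := max_le (hm ▸ hq₁l) (le_of_lt (lt_of_le_of_lt hb₁ hflt))
    · calc vlm ((q₂ + a₂) • g₂) ≤ max (vlm (q₂ • g₂)) (vlm (a₂ • g₂)) := by
            rw [add_smul]; exact vlm_add_le
        _ ≤ vlm f := max_le (hm ▸ hq₂l) (le_of_lt (lt_of_le_of_lt hb₂ hflt))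

theorem decomp {M : Submodule (Polynomial F) (Fin 2 → Polynomial F)}
    {g₁ g₂ : Fin 2 → Polynomial F} (h₁ : g₁ ∈ M) (h₂ : g₂ ∈ M)
    (hspan : ltSubmodule ({g₁, g₂} : Set (Fin 2 → Polynomial F))
      = ltSubmodule (M : Set (Fin 2 → Polynomial F)))
    (h12 : (g₁ 1).coeff 0 = 0)
    {f : Fin 2 → Polynomial F} (hf : f ∈ M) (hf0 : (f 1).coeff 0 ≠ 0) :
    ∃ a₁ a₂ : Polynomial F, f = a₁ • g₁ + a₂ • g₂ ∧
      vlm (a₁ • g₁) ≤ vlm f ∧ vlm (a₂ • g₂) ≤ vlm f ∧ a₂.coeff 0 ≠ 0 := by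
  obtain ⟨a₁, a₂, hrep, hb₁, hb₂⟩ := division h₁ h₂ hspan f hf
  refine ⟨a₁, a₂, hrep, hb₁, hb₂, ?_⟩
  intro hz
  apply hf0
  rw [hrep, Pi.add_apply, Pi.smul_apply, Pi.smul_apply, smul_eq_mul, smul_eq_mul,
    Polynomial.coeff_add, Polynomial.mul_coeff_zero, Polynomial.mul_coeff_zero, h12, hz]
  ring

end Division

theorem minimal_nonzero_const_param' {F : Type*} [Field F]
    (M : Submodule (Polynomial F) (Fin 2 → Polynomial F))
    (g₁ g₂ : Fin 2 → Polynomial F)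
    (hGB : (({g₁, g₂} : Finset (Fin 2 → Polynomial F)) : Set (Fin 2 → Polynomial F)) ⊆ M ∧
      ltSubmodule ((({g₁, g₂} : Finset (Fin 2 → Polynomial F)) : Set (Fin 2 → Polynomial F)))
        = ltSubmodule (M : Set (Fin 2 → Polynomial F)))
    (h12 : (g₁ 1).coeff 0 = 0) (h22 : (g₂ 1).coeff 0 ≠ 0) :
    (∀ f, f ∈ M → (f 1).coeff 0 ≠ 0 → vlm g₂ ≤ vlm f) ∧
    (∀ f, f ∈ M → (f 1).coeff 0 ≠ 0 →
      (∀ f', f' ∈ M → (f' 1).coeff 0 ≠ 0 → vlm f ≤ vlm f') →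
      ∃ (a₂ : F) (a₁ : Polynomial F), a₂ ≠ 0 ∧ vlm (a₁ • g₁) ≤ vlm g₂ ∧
        f = (C a₂) • g₂ + a₁ • g₁) := by
  have hset : ((({g₁, g₂} : Finset (Fin 2 → Polynomial F)) : Set (Fin 2 → Polynomial F)))
      = ({g₁, g₂} : Set (Fin 2 → Polynomial F)) := by simp
  have h₁ : g₁ ∈ M := hGB.1 (by simp)
  have h₂ : g₂ ∈ M := hGB.1 (by simp)
  have hspan : ltSubmodule ({g₁, g₂} : Set (Fin 2 → Polynomial F))
      = ltSubmodule (M : Set (Fin 2 → Polynomial F)) := by rw [← hset]; exact hGB.2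
  have hg₂ne : g₂ ≠ 0 := by
    intro h0
    apply h22
    rw [h0, Pi.zero_apply, Polynomial.coeff_zero]
  obtain ⟨m₂, hm₂⟩ := exists_vlm hg₂ne
  have part1 : ∀ f, f ∈ M → (f 1).coeff 0 ≠ 0 → vlm g₂ ≤ vlm f := by
    intro f hf hf0
    obtain ⟨a₁, a₂, hrep, hb₁, hb₂, ha₂⟩ := decomp h₁ h₂ hspan h12 hf hf0
    have ha₂0 : a₂ ≠ 0 := fun h0 => ha₂ (by rw [h0, Polynomial.coeff_zero])
    refine le_trans ?_ hb₂
    rw [hm₂, vlm_smul ha₂0 hm₂]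
    apply WithBot.coe_le_coe.mpr
    show toLex ((ofLex m₂).1, (ofLex m₂).2) ≤ toLex (a₂.natDegree + (ofLex m₂).1, (ofLex m₂).2)
    apply toLex_le_toLex.mpr
    rcases Nat.eq_zero_or_pos a₂.natDegree with h0 | hpos
    · exact Or.inr ⟨by rw [h0, zero_add], le_refl _⟩
    · exact Or.inl (by omega)
  refine ⟨part1, ?_⟩
  intro f hf hf0 hmin
  have heq : vlm f = vlm g₂ := le_antisymm (hmin g₂ h₂ h22) (part1 f hf hf0)
  obtain ⟨a₁, a₂, hrep, hb₁, hb₂, ha₂⟩ := decomp h₁ h₂ hspan h12 hf hf0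
  have ha₂0 : a₂ ≠ 0 := fun h0 => ha₂ (by rw [h0, Polynomial.coeff_zero])
  have hdeg : a₂.natDegree = 0 := by
    have hb : vlm (a₂ • g₂) ≤ vlm g₂ := le_trans hb₂ (le_of_eq heq)
    rw [vlm_smul ha₂0 hm₂, hm₂] at hb
    have hb' : toLex (a₂.natDegree + (ofLex m₂).1, (ofLex m₂).2)
        ≤ toLex ((ofLex m₂).1, (ofLex m₂).2) := WithBot.coe_le_coe.mp hb
    rcases toLex_le_toLex.mp hb' with hlt | ⟨heqn, -⟩
    · omega
    · omega
  obtain ⟨c, hc⟩ := Polynomial.natDegree_eq_zero.mp hdeg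
  have hc0 : c ≠ 0 := by
    intro h0
    rw [h0, map_zero] at hc
    exact ha₂0 hc.symm
  refine ⟨c, a₁, hc0, le_trans hb₁ (le_of_eq heq), ?_⟩
  rw [hrep, ← hc, add_comm]

/-- Let `M ⊆ F[x]^2` be a 2-dimensional submodule with minimal Gröbner basis
`{g₁ = (g₁₁,g₁₂), g₂ = (g₂₁,g₂₂)}` with `g₁₂(0) = 0` and `g₂₂(0) ≠ 0`. Then `g₂` has minimal
leading monomial among all `f = (f₁,f₂) ∈ M` with `f₂(0) ≠ 0`, and every such minimal `f` has
the form `f = a₂ g₂ + a₁ g₁` with `a₂` a nonzero scalar and `lm (a₁ g₁) ≤ lm g₂`. -/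
theorem minimal_nonzero_const_param {F : Type*} [Field F]
    (M : Submodule (Polynomial F) (Fin 2 → Polynomial F))
    (hrank : Module.rank (Polynomial F) ↥M = 2)
    (g₁ g₂ : Fin 2 → Polynomial F) (hne : g₁ ≠ g₂)
    (hGB : IsMinimalGroebner M ({g₁, g₂} : Finset (Fin 2 → Polynomial F)))
    (h12 : (g₁ 1).coeff 0 = 0) (h22 : (g₂ 1).coeff 0 ≠ 0) :
    (∀ f, f ∈ M → (f 1).coeff 0 ≠ 0 → vlm g₂ ≤ vlm f) ∧
    (∀ f, f ∈ M → (f 1).coeff 0 ≠ 0 →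
      (∀ f', f' ∈ M → (f' 1).coeff 0 ≠ 0 → vlm f ≤ vlm f') →
      ∃ (a₂ : F) (a₁ : Polynomial F), a₂ ≠ 0 ∧ vlm (a₁ • g₁) ≤ vlm g₂ ∧
        f = (C a₂) • g₂ + a₁ • g₁) := by
  obtain ⟨⟨hsub, hspan⟩, -⟩ := hGB
  exact minimal_nonzero_const_param' M g₁ g₂ ⟨hsub, hspan⟩ h12 h22
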